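/- Let κ be a regular uncountable cardinal, I an ideal on ℕ, and m a fast sequence. Suppose ℬ₁ ⋖ ℬ₂ are complete Boolean algebras, ℬ₁ has the (κ,I,m)-c.c., and the pair (ℬ₁,ℬ₂) has the (κ,I,m)-pattern transfer property. Then ℬ₂ has the (κ,I,m)-c.c. -/

import Mathlib

universe u v

/-- `mCirc m i = ∏_{j<i} m j` (so `mCirc m 0 = 1`). -/
def mCirc (m : ℕ → ℕ) (i : ℕ) : ℕ := ∏ j ∈ Finset.range i, m j

/-- A *fast sequence* is `m : ℕ → ℕ` with `m 0 ≥ 2` and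
`m i ≥ ((m°(i))^(i^i))^(4·(m°(i))^(i^i))` for all `i`. -/
def FastSeq (m : ℕ → ℕ) : Prop :=
  2 ≤ m 0 ∧ ∀ i, (mCirc m i ^ i ^ i) ^ (4 * mCirc m i ^ i ^ i) ≤ m i

/-- An ideal on `ℕ`: contains all finite sets, closed under subsets and finite
unions. -/
def IsIdealOnNat (I : Set (Set ℕ)) : Prop :=
  (∀ v : Set ℕ, v.Finite → v ∈ I) ∧ (∀ v ∈ I, ∀ w ⊆ v, w ∈ I) ∧
    (∀ v ∈ I, ∀ w ∈ I, v ∪ w ∈ I)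

/-- A subset `S` of a complete Boolean algebra `B` is a complete subalgebra if it
contains `⊥` and is closed under complements, binary meets, and arbitrary suprema
(the latter computed in `B`; this is the meaning of `S ⋖ B`). -/
def IsCompleteSubalgebra {B : Type v} [CompleteBooleanAlgebra B] (S : Set B) : Prop :=
  ⊥ ∈ S ∧ (∀ a ∈ S, aᶜ ∈ S) ∧ (∀ a ∈ S, ∀ b ∈ S, a ⊓ b ∈ S) ∧
    ∀ T ⊆ S, sSup T ∈ S

/-- The `κ`-c.c. for the (sub)algebra `S` of `B`: every antichain of nonzero
elements of `S` has cardinality `< κ`.  (Elements of `Set B` live in universe `v`,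
so the cardinality is compared after lifting.) -/
def KappaCCOn (κ : Cardinal.{u}) {B : Type v} [CompleteBooleanAlgebra B]
    (S : Set B) : Prop :=
  ∀ A : Set B, A ⊆ S → (∀ a ∈ A, a ≠ ⊥) →
    (A.Pairwise fun a b => a ⊓ b = ⊥) →
    Cardinal.lift.{u} (Cardinal.mk ↥A) < Cardinal.lift.{v} κ

/-- The `(κ, I, m)`-chain condition for the (sub)algebra `S` of the complete
Boolean algebra `B`.  The index set of ordinals below `κ` is represented by the
type `κ.ord.ToType`. -/
def CCCOn (κ : Cardinal.{u}) (I : Set (Set ℕ)) (m : ℕ → ℕ)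
    {B : Type v} [CompleteBooleanAlgebra B] (S : Set B) : Prop :=
  ∀ U₂ : Set κ.ord.ToType, Cardinal.mk ↥U₂ = κ →
    ∀ a : κ.ord.ToType → B, (∀ α ∈ U₂, a α ∈ S ∧ a α ≠ ⊥) →
      ∃ j : ℕ, ∃ U₁ ⊆ U₂, Cardinal.mk ↥U₁ = κ ∧ ∃ A ∈ I,
        ∀ n : ℕ, n ∉ A → ∀ u : Finset κ.ord.ToType, ↑u ⊆ U₁ →
          ∀ i : ℕ, i + j < n →
            m n < u.card * mCirc m n ^ n ^ i → u.card ≤ m n →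
            ∃ v ⊆ u, u.card ≤ v.card * mCirc m n ^ n ^ (i + j) ∧
              v.inf a ≠ ⊥

/-- `a` is below the projection of `b` (relative to the subalgebra `S₁`):
every nonzero `c ∈ S₁` with `c ≤ a` satisfies `c ⊓ b ≠ ⊥`. -/
def BelowProj {B : Type v} [CompleteBooleanAlgebra B] (S₁ : Set B) (a b : B) :
    Prop :=
  ∀ c ∈ S₁, c ≠ ⊥ → c ≤ a → c ⊓ b ≠ ⊥

/-- The pair `(S₁, S₂)` of subalgebras of `B` has the `(κ, I, m)`-pattern
transfer property. -/
def PatternTransfer (κ : Cardinal.{u}) (I : Set (Set ℕ)) (m : ℕ → ℕ)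
    {B : Type v} [CompleteBooleanAlgebra B] (S₁ S₂ : Set B) : Prop :=
  IsCompleteSubalgebra S₁ ∧ IsCompleteSubalgebra S₂ ∧ S₁ ⊆ S₂ ∧
  KappaCCOn κ S₁ ∧
  ∀ U₂ : Set κ.ord.ToType, Cardinal.mk ↥U₂ = κ →
    ∀ a2 : κ.ord.ToType → B, (∀ α ∈ U₂, a2 α ∈ S₂ ∧ a2 α ≠ ⊥) →
      (∀ α ∈ U₂, ∀ β ∈ U₂, a2 α = a2 β → α = β) →
      ∃ j : ℕ, ∃ U₁ ⊆ U₂, Cardinal.mk ↥U₁ = κ ∧ ∃ A ∈ I,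
        ∃ a1 : κ.ord.ToType → B,
          (∀ α ∈ U₁, a1 α ∈ S₁ ∧ a1 α ≠ ⊥ ∧ BelowProj S₁ (a1 α) (a2 α)) ∧
          ∀ n : ℕ, n ∉ A → ∀ i : ℕ, i + j < n →
            ∀ u : Finset κ.ord.ToType, ↑u ⊆ U₁ →
              m n < u.card * mCirc m n ^ n ^ i → u.card < m n →
              ∀ a ∈ S₁, a ≠ ⊥ → a ≤ u.inf a1 →
                ∃ v ⊆ u, u.card ≤ v.card * mCirc m n ^ n ^ (i + j) ∧
                  v.inf a2 ⊓ a ≠ ⊥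

private lemma fast_two_le {m : ℕ → ℕ} (hm : FastSeq m) : ∀ i, 2 ≤ m i := by
  intro i
  induction i using Nat.strong_induction_on with
  | _ i ih =>
    match i with
    | 0 => exact hm.1
    | (k+1) =>
      have hc : 2 ≤ mCirc m (k+1) := by
        have h2 : (2:ℕ)^(k+1) ≤ ∏ j ∈ Finset.range (k+1), m j := by
          have := Finset.pow_card_le_prod (Finset.range (k+1)) m 2
            (fun j hj => ih j (Finset.mem_range.mp hj))
          simpa using this
        calc (2:ℕ) ≤ 2^(k+1) := Nat.le_self_pow (Nat.succ_ne_zero k) 2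
          _ ≤ mCirc m (k+1) := by simpa [mCirc] using h2
      have hP : 2 ≤ mCirc m (k+1) ^ (k+1)^(k+1) :=
        le_trans (Nat.le_self_pow (by positivity) 2) (Nat.pow_le_pow_left hc _)
      calc (2:ℕ) ≤ mCirc m (k+1) ^ (k+1)^(k+1) := hP
        _ ≤ (mCirc m (k+1) ^ (k+1)^(k+1)) ^ (4 * mCirc m (k+1) ^ (k+1)^(k+1)) :=
            Nat.le_self_pow (by positivity) _
        _ ≤ m (k+1) := hm.2 (k+1)

private lemma two_le_mCirc {m : ℕ → ℕ} (hm2 : ∀ i, 2 ≤ m i) {n : ℕ} (hn : 1 ≤ n) :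
    2 ≤ mCirc m n := by
  have h2 : (2:ℕ)^n ≤ ∏ j ∈ Finset.range n, m j := by
    have := Finset.pow_card_le_prod (Finset.range n) m 2 (fun j _ => hm2 j)
    simpa using this
  calc (2:ℕ) ≤ 2^n := Nat.le_self_pow (by omega) 2
    _ ≤ mCirc m n := by simpa [mCirc] using h2

private lemma finset_inf_mem {B : Type v} [CompleteBooleanAlgebra B] {S : Set B}
    (hS : IsCompleteSubalgebra S) {ι : Type u} (s : Finset ι) (f : ι → B)
    (h : ∀ x ∈ s, f x ∈ S) : s.inf f ∈ S := by
  classical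
  induction s using Finset.induction_on with
  | empty =>
    have htop : (⊤ : B) ∈ S := by
      have := hS.2.1 ⊥ hS.1
      rwa [compl_bot] at this
    simpa using htop
  | @insert x s' hx ih =>
    rw [Finset.inf_insert]
    exact hS.2.2.1 _ (h x (Finset.mem_insert_self x s'))
      _ (ih (fun y hy => h y (Finset.mem_insert_of_mem hy)))

private lemma pow_mul_pow_le {P n k l : ℕ} (hP : 1 ≤ P) (hn : 2 ≤ n) (hkl : k ≤ l) :
    P ^ n ^ k * P ^ n ^ l ≤ P ^ n ^ (l+1) := by
  rw [← pow_add]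
  apply Nat.pow_le_pow_right hP
  have h1 : n ^ k ≤ n ^ l := Nat.pow_le_pow_right (by omega) hkl
  have h2 : n * n ^ l = n ^ (l+1) := by rw [pow_succ]; ring
  have h3 : 2 * n ^ l ≤ n * n ^ l := Nat.mul_le_mul_right _ hn
  omega

/-- (Observation 7.13.)  If `ℬ₁ ⋖ ℬ₂` are complete Boolean algebras (represented
as complete subalgebras `S₁ ⊆ S₂` of `B`), `S₁` has the `(κ,I,m)`-c.c., and the
pair `(S₁,S₂)` has the `(κ,I,m)`-pattern transfer property, then `S₂` has the
`(κ,I,m)`-c.c. -/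
theorem ccc_of_patternTransfer (κ : Cardinal.{u})
    (hreg : κ.IsRegular) (hunc : Cardinal.aleph0 < κ)
    (I : Set (Set ℕ)) (hI : IsIdealOnNat I) (m : ℕ → ℕ) (hm : FastSeq m)
    {B : Type v} [CompleteBooleanAlgebra B] (S₁ S₂ : Set B)
    (hcc : CCCOn κ I m S₁) (hpt : PatternTransfer κ I m S₁ S₂) :
    CCCOn κ I m S₂ := by
  obtain ⟨hS1, hS2, hsub, hkcc, hPT⟩ := hpt
  have hm2 : ∀ i, 2 ≤ m i := fast_two_le hm
  intro U₂ hU₂ a ha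
  classical
  by_cases hfib : ∃ b : B, Cardinal.mk ↥{α | α ∈ U₂ ∧ a α = b} = κ
  · -- some fiber has full size: take it, the family is constant on it
    obtain ⟨b, hb⟩ := hfib
    refine ⟨0, {α | α ∈ U₂ ∧ a α = b}, fun α hα => hα.1, hb, ∅,
      hI.1 ∅ Set.finite_empty, ?_⟩
    intro n _ u hu i hij h1 h2
    have hmn : 2 ≤ m n := hm2 n
    have hucard : 0 < u.card := by
      rcases Nat.eq_zero_or_pos u.card with h | h
      · rw [h] at h1; simp at h1
      · exact h
    have hne : u.Nonempty := Finset.card_pos.mp hucard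
    have hP1 : 0 < mCirc m n ^ n ^ (i + 0) :=
      pow_pos (Finset.prod_pos (fun j _ => lt_of_lt_of_le two_pos (hm2 j))) _
    refine ⟨u, Finset.Subset.refl u, Nat.le_mul_of_pos_right _ hP1, ?_⟩
    have hconst : u.inf a = b := by
      rw [Finset.inf_congr rfl (fun x hx => (hu hx).2), Finset.inf_const hne]
    obtain ⟨α, hα⟩ := hne
    have hbne : b ≠ ⊥ := by
      have := (ha α (hu hα).1).2
      rwa [(hu hα).2] at this
    rw [hconst]; exact hbne
  · push_neg at hfib
    set F : κ.ord.ToType → Set κ.ord.ToType := fun α => {β | β ∈ U₂ ∧ a β = a α}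
      with hFdef
    have hU₂ne : U₂.Nonempty := by
      rw [← Set.nonempty_coe_sort, ← Cardinal.mk_ne_zero_iff, hU₂]
      exact hreg.pos.ne'
    obtain ⟨α₀, hα₀⟩ := hU₂ne
    let g : Set κ.ord.ToType → κ.ord.ToType := fun S => if h : S.Nonempty then h.some else α₀
    have hg : ∀ S : Set κ.ord.ToType, ∀ h : S.Nonempty, g S ∈ S := by
      intro S h
      simp only [g, dif_pos h]
      exact h.some_mem
    set U : Set κ.ord.ToType := (fun α => g (F α)) '' U₂ with hUdef
    have hFmem : ∀ α ∈ U₂, g (F α) ∈ F α := fun α hα => hg _ ⟨α, hα, rfl⟩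
    have hFeq : ∀ α β, β ∈ F α → F β = F α := by
      intro α β hβ
      ext γ
      simp only [hFdef, Set.mem_setOf_eq, hβ.2]
    have hUsub : U ⊆ U₂ := by
      rintro _ ⟨α, hα, rfl⟩
      exact (hFmem α hα).1
    have hfix : ∀ ρ ∈ U, g (F ρ) = ρ := by
      rintro _ ⟨α, hα, rfl⟩
      rw [hFeq α (g (F α)) (hFmem α hα)]
    have hinj : ∀ ρ ∈ U, ∀ σ ∈ U, a ρ = a σ → ρ = σ := by
      intro ρ hρ σ hσ he
      have hFe : F ρ = F σ := by
        ext γ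
        simp only [hFdef, Set.mem_setOf_eq, he]
      rw [← hfix ρ hρ, hFe, hfix σ hσ]
    have hUcard : Cardinal.mk ↥U = κ := by
      have hle : Cardinal.mk ↥U ≤ κ :=
        le_of_le_of_eq (Cardinal.mk_le_mk_of_subset hUsub) hU₂
      rcases lt_or_eq_of_le hle with hlt | h
      · exfalso
        have hcover : U₂ ⊆ ⋃ γ ∈ U, F γ := by
          intro α hα
          refine Set.mem_biUnion ⟨α, hα, rfl⟩ ?_
          rw [hFeq α (g (F α)) (hFmem α hα)]
          exact ⟨hα, rfl⟩
        have h1 : κ ≤ Cardinal.mk ↥(⋃ γ ∈ U, F γ) :=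
          le_of_eq_of_le hU₂.symm (Cardinal.mk_le_mk_of_subset hcover)
        have h2 := Cardinal.mk_biUnion_le F U
        have h3 : (⨆ γ : ↥U, Cardinal.mk ↥(F ↑γ)) < κ := by
          apply Cardinal.iSup_lt_of_isRegular hreg hlt
          intro γ
          exact lt_of_le_of_ne
            (le_of_le_of_eq (Cardinal.mk_le_mk_of_subset (fun β hβ => hβ.1)) hU₂)
            (hfib (a ↑γ))
        have h4 := Cardinal.mul_lt_of_lt hreg.aleph0_le hlt h3
        exact absurd (lt_of_le_of_lt (le_trans h1 h2) h4) (lt_irrefl κ)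
      · exact h
    obtain ⟨jpt, Up, hUpsub, hUpcard, Apt, hApt, a1, ha1, hptmain⟩ :=
      hPT U hUcard a (fun α hα => ha α (hUsub hα)) hinj
    obtain ⟨jcc, U₁, hU₁sub, hU₁card, Acc, hAcc, hccmain⟩ :=
      hcc Up hUpcard a1 (fun α hα => ⟨(ha1 α hα).1, (ha1 α hα).2.1⟩)
    refine ⟨jpt + jcc + 3, U₁, fun α hα => hUsub (hUpsub (hU₁sub hα)), hU₁card,
      Apt ∪ Acc, hI.2.2 _ hApt _ hAcc, ?_⟩
    intro n hn u hu i hij h1 h2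
    have hnpt : n ∉ Apt := fun h => hn (Set.mem_union_left _ h)
    have hncc : n ∉ Acc := fun h => hn (Set.mem_union_right _ h)
    set P := mCirc m n with hPdef
    have hn2 : 2 ≤ n := by omega
    have hP2 : 2 ≤ P := two_le_mCirc hm2 (by omega)
    have hmn2 : 2 ≤ m n := hm2 n
    have hucard : 0 < u.card := by
      rcases Nat.eq_zero_or_pos u.card with h | h
      · rw [h] at h1; simp at h1
      · exact h
    obtain ⟨v₁, hv₁sub, hv₁b, hv₁inf⟩ := hccmain n hncc u hu i (by omega) h1 h2
    have hv₁pos : 0 < v₁.card := by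
      rcases Nat.eq_zero_or_pos v₁.card with h | h
      · rw [h, zero_mul] at hv₁b
        omega
      · exact h
    obtain ⟨v₂, hv₂sub, hv₂lt, hv₂ge, hv₂inf⟩ :
        ∃ v₂ ⊆ v₁, v₂.card < m n ∧ v₁.card ≤ 2 * v₂.card ∧ v₂.inf a1 ≠ ⊥ := by
      by_cases h : v₁.card < m n
      · exact ⟨v₁, Finset.Subset.refl _, h, by omega, hv₁inf⟩
      · have hv₁card : v₁.card = m n :=
          le_antisymm (le_trans (Finset.card_le_card hv₁sub) h2) (le_of_not_gt h)
        obtain ⟨x, hx⟩ : v₁.Nonempty := Finset.card_pos.mp hv₁pos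
        refine ⟨v₁.erase x, Finset.erase_subset x v₁, ?_, ?_, ?_⟩
        · rw [Finset.card_erase_of_mem hx]; omega
        · rw [Finset.card_erase_of_mem hx]; omega
        · intro hbot
          apply hv₁inf
          have hle := Finset.inf_mono (Finset.erase_subset x v₁) (f := a1)
          rw [hbot] at hle
          exact le_bot_iff.mp hle
    have hb2 : u.card ≤ v₂.card * P ^ n ^ (i + jcc + 1) := by
      have e1 : P ^ n ^ 0 * P ^ n ^ (i+jcc) ≤ P ^ n ^ (i+jcc+1) :=
        pow_mul_pow_le (by omega) hn2 (Nat.zero_le _)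
      have e0 : 2 ≤ P ^ n ^ 0 := by simpa using hP2
      calc u.card ≤ v₁.card * P ^ n ^ (i+jcc) := hv₁b
        _ ≤ (2 * v₂.card) * P ^ n ^ (i+jcc) := Nat.mul_le_mul_right _ hv₂ge
        _ = v₂.card * (2 * P ^ n ^ (i+jcc)) := by ring
        _ ≤ v₂.card * (P ^ n ^ 0 * P ^ n ^ (i+jcc)) :=
            Nat.mul_le_mul_left _ (Nat.mul_le_mul_right _ e0)
        _ ≤ v₂.card * P ^ n ^ (i+jcc+1) := Nat.mul_le_mul_left _ e1
    have hprem : m n < v₂.card * P ^ n ^ (i + jcc + 2) := by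
      have e2 : P ^ n ^ i * P ^ n ^ (i+jcc+1) ≤ P ^ n ^ (i+jcc+2) :=
        pow_mul_pow_le (by omega) hn2 (by omega)
      calc m n < u.card * P ^ n ^ i := h1
        _ ≤ (v₂.card * P ^ n ^ (i+jcc+1)) * P ^ n ^ i := Nat.mul_le_mul_right _ hb2
        _ = v₂.card * (P ^ n ^ i * P ^ n ^ (i+jcc+1)) := by ring
        _ ≤ v₂.card * P ^ n ^ (i+jcc+2) := Nat.mul_le_mul_left _ e2
    have hmem : ∀ x ∈ v₂, a1 x ∈ S₁ :=
      fun x hx => (ha1 x (hU₁sub (hu (hv₁sub (hv₂sub hx))))).1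
    have hv₂S : v₂.inf a1 ∈ S₁ := finset_inf_mem hS1 v₂ a1 hmem
    obtain ⟨v, hvsub, hvb, hvinf⟩ := hptmain n hnpt (i+jcc+2) (by omega) v₂
      (fun x hx => hU₁sub (hu (hv₁sub (hv₂sub hx)))) hprem hv₂lt
      (v₂.inf a1) hv₂S hv₂inf le_rfl
    refine ⟨v, hvsub.trans (hv₂sub.trans hv₁sub), ?_, ?_⟩
    · have e3 : P ^ n ^ (i+jcc+1) * P ^ n ^ (i+jcc+2+jpt) ≤ P ^ n ^ (i+jcc+2+jpt+1) :=
        pow_mul_pow_le (by omega) hn2 (by omega)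
      have : u.card ≤ v.card * P ^ n ^ (i+jcc+2+jpt+1) := by
        calc u.card ≤ v₂.card * P ^ n ^ (i+jcc+1) := hb2
          _ ≤ (v.card * P ^ n ^ (i+jcc+2+jpt)) * P ^ n ^ (i+jcc+1) :=
              Nat.mul_le_mul_right _ hvb
          _ = v.card * (P ^ n ^ (i+jcc+1) * P ^ n ^ (i+jcc+2+jpt)) := by ring
          _ ≤ v.card * P ^ n ^ (i+jcc+2+jpt+1) := Nat.mul_le_mul_left _ e3
      have heq : i + jcc + 2 + jpt + 1 = i + (jpt + jcc + 3) := by omega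
      rwa [heq] at this
    · intro hbot
      apply hvinf
      rw [hbot, bot_inf_eq]
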